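/- arXiv:1807.10220 — 4 statements merged into one kernel-verified Lean document; each statement's English description precedes it below -/
import Mathlib

section
/- The Lagrange equilateral configuration is a relative equilibrium of the three-body problem: for any masses m₁, m₂, m₃ > 0 there exists an angular velocity ω > 0 such that three bodies placed at the vertices of an equilateral triangle of side a, each rotating uniformly about the common center of mass with angular velocity ω, solve the Newtonian equations of motion; moreover ω² = G(m₁+m₂+m₃)/a³. -/
open Finset

lemma rot_hasDerivAt (ω : ℝ) (c : ℂ) (t : ℝ) :
    HasDerivAt (fun s : ℝ => Complex.exp (Complex.I * (ω * s)) * c)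
      (Complex.I * ω * Complex.exp (Complex.I * (ω * t)) * c) t := by
  have h1 : HasDerivAt (fun s : ℝ => (s : ℂ)) 1 t := Complex.ofRealCLM.hasDerivAt
  have h2 := ((h1.const_mul (Complex.I * (ω : ℂ))).cexp).mul_const c
  have he : (fun s : ℝ => Complex.exp (Complex.I * (ω : ℂ) * (s : ℂ)) * c)
      = fun s : ℝ => Complex.exp (Complex.I * ((ω : ℝ) * s : ℝ)) * c := by
    funext s; push_cast; ring_nf
  simpa [he, mul_assoc, mul_comm, mul_left_comm] using h2

lemma rot_deriv2 (ω : ℝ) (c : ℂ) (t : ℝ) :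
    deriv (deriv (fun s : ℝ => Complex.exp (Complex.I * (ω * s)) * c)) t
      = -(ω : ℂ) ^ 2 * Complex.exp (Complex.I * (ω * t)) * c := by
  have hd : deriv (fun s : ℝ => Complex.exp (Complex.I * (ω * s)) * c)
      = fun s : ℝ => Complex.exp (Complex.I * (ω * s)) * (Complex.I * ω * c) := by
    funext s
    rw [(rot_hasDerivAt ω c s).deriv]; ring
  rw [hd, (rot_hasDerivAt ω (Complex.I * ω * c) t).deriv]
  have : Complex.I * Complex.I = -1 := Complex.I_mul_I
  ring_nf
  rw [Complex.I_sq]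
  ring

/-- The Lagrange equilateral configuration is a relative equilibrium of the
three-body problem: for any positive masses placed at the vertices of an
equilateral triangle of side `a` with center of mass at the origin, there is
`ω > 0` with `ω² = G(m₁+m₂+m₃)/a³` such that uniform rotation with angular
velocity `ω` solves the Newtonian equations of motion. -/
theorem lagrange_equilateral_relative_equilibrium
    (G a : ℝ) (hG : 0 < G) (ha : 0 < a)
    (m : Fin 3 → ℝ) (hm : ∀ i, 0 < m i)
    (p : Fin 3 → ℂ)
    (hside : ∀ i j : Fin 3, i ≠ j → dist (p i) (p j) = a)
    (hcom : (∑ i, m i • p i) = 0) :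
    ∃ ω : ℝ, 0 < ω ∧ ω ^ 2 = G * (m 0 + m 1 + m 2) / a ^ 3 ∧
      ∀ i : Fin 3, ∀ t : ℝ,
        deriv (deriv (fun s : ℝ => Complex.exp (Complex.I * (ω * s)) * p i)) t
          = ∑ j ∈ Finset.univ \ {i},
              (G * m j /
                dist (Complex.exp (Complex.I * (ω * t)) * p j)
                  (Complex.exp (Complex.I * (ω * t)) * p i) ^ 3) •
                (Complex.exp (Complex.I * (ω * t)) * p j
                  - Complex.exp (Complex.I * (ω * t)) * p i) := by
  have hM : 0 < m 0 + m 1 + m 2 := by have := hm 0; have := hm 1; have := hm 2; linarith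
  have hω2pos : 0 < G * (m 0 + m 1 + m 2) / a ^ 3 := by positivity
  refine ⟨Real.sqrt (G * (m 0 + m 1 + m 2) / a ^ 3), Real.sqrt_pos.mpr hω2pos,
    Real.sq_sqrt hω2pos.le, ?_⟩
  set ω := Real.sqrt (G * (m 0 + m 1 + m 2) / a ^ 3) with hωdef
  have hω2 : (ω : ℝ) ^ 2 = G * (m 0 + m 1 + m 2) / a ^ 3 := Real.sq_sqrt hω2pos.le
  intro i t
  set E := Complex.exp (Complex.I * (ω * t)) with hE
  -- distances
  have hEnorm : ‖E‖ = 1 := by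
    rw [hE, Complex.norm_exp]
    simp [Complex.mul_re]
  have hdist : ∀ j k : Fin 3, j ≠ k → dist (E * p j) (E * p k) = a := by
    intro j k hjk
    rw [dist_eq_norm]
    have : E * p j - E * p k = E * (p j - p k) := by ring
    rw [this]
    simp only [norm_mul]
    rw [show ‖E‖ = 1 from hEnorm]
    rw [one_mul, ← dist_eq_norm]
    exact hside j k hjk
  rw [rot_deriv2]
  have hcom' : (m 0 : ℂ) * p 0 + (m 1 : ℂ) * p 1 + (m 2 : ℂ) * p 2 = 0 := by
    have := hcom
    rw [Fin.sum_univ_three] at this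
    simpa [Complex.real_smul] using this
  have hω2c : ((ω : ℝ) : ℂ) ^ 2 = (G : ℂ) * ((m 0 : ℂ) + m 1 + m 2) / (a : ℂ) ^ 3 := by
    have := hω2
    exact_mod_cast congrArg Complex.ofReal this
  have ha0 : (a : ℂ) ≠ 0 := by exact_mod_cast ha.ne'
  rw [← hE]
  have hi : i = 0 ∨ i = 1 ∨ i = 2 := by fin_cases i <;> decide
  rcases hi with rfl | rfl | rfl
  · rw [show (Finset.univ \ {(0:Fin 3)}) = {1,2} from by decide,
      Finset.sum_insert (by decide), Finset.sum_singleton,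
      hdist 1 0 (by decide), hdist 2 0 (by decide)]
    simp only [Complex.real_smul]
    push_cast
    rw [hω2c]
    field_simp
    linear_combination (-(G:ℂ) * E) * hcom'
  · rw [show (Finset.univ \ {(1:Fin 3)}) = {0,2} from by decide,
      Finset.sum_insert (by decide), Finset.sum_singleton,
      hdist 0 1 (by decide), hdist 2 1 (by decide)]
    simp only [Complex.real_smul]
    push_cast
    rw [hω2c]
    field_simp
    linear_combination (-(G:ℂ) * E) * hcom'
  · rw [show (Finset.univ \ {(2:Fin 3)}) = {0,1} from by decide,
      Finset.sum_insert (by decide), Finset.sum_singleton,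
      hdist 0 2 (by decide), hdist 1 2 (by decide)]
    simp only [Complex.real_smul]
    push_cast
    rw [hω2c]
    field_simp
    linear_combination (-(G:ℂ) * E) * hcom'
end

section
/- For any positive masses m₁, m₂, m₃ and any ordering of the three bodies on a line, there exists a collinear central configuration (Euler configuration): there exist distinct collinear positions q₁, q₂, q₃ with center of mass at the origin and a constant λ > 0 such that the gravitational acceleration on each body equals −λ qᵢ. -/
open Finset

lemma euler_quintic_root (a b c : ℝ) (ha : 0 < a) (hb : 0 < b) (hc : 0 < c) :
    ∃ x : ℝ, 0 < x ∧
      (a + (a+b)*x) * (b*x^2*(1+x)^2 + c*x^2)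
        - (b + c + c*x) * (a*x^2 + b*(1+x)^2) = 0 := by
  set P : ℝ → ℝ := fun x =>
    (a + (a+b)*x) * (b*x^2*(1+x)^2 + c*x^2)
      - (b + c + c*x) * (a*x^2 + b*(1+x)^2) with hPdef
  obtain ⟨t, ht, htdef⟩ : ∃ t : ℝ, 0 < t ∧ (a+b)*b*t = (b+2*c)*(a+4*b) := by
    refine ⟨((b+2*c)*(a+4*b))/((a+b)*b), by positivity, ?_⟩
    field_simp
  set X : ℝ := 1 + t with hXdef
  have hX1 : 1 ≤ X := by linarith
  have hXpos : 0 < X := by linarith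
  have hX2 : (b+2*c)*(a+4*b) < (a+b)*b*X^2 := by
    have h1 : t < X^2 := by nlinarith
    nlinarith [mul_pos (mul_pos (by linarith : (0:ℝ) < a+b) hb) (sub_pos.mpr h1)]
  have hcont : ContinuousOn P (Set.Icc 0 X) := by fun_prop
  have hP0 : P 0 < 0 := by
    simp only [hPdef]
    nlinarith [hb.le, hc.le]
  have hPX : 0 < P X := by
    have hT1 : (a+b)*X*(b*X^2*X^2) ≤ (a + (a+b)*X) * (b*X^2*(1+X)^2 + c*X^2) := by
      have h1 : b*X^2*X^2 ≤ b*X^2*(1+X)^2 + c*X^2 := by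
        nlinarith [mul_nonneg (mul_nonneg hb.le (sq_nonneg X)) (by linarith : (0:ℝ) ≤ 1+2*X),
          mul_nonneg hc.le (sq_nonneg X)]
      have h2 : (a+b)*X ≤ a + (a+b)*X := by linarith
      have h3 : (0:ℝ) ≤ (a+b)*X := by positivity
      have h4 : (0:ℝ) ≤ b*X^2*X^2 := by positivity
      exact mul_le_mul h2 h1 h4 (by linarith)
    have hT2 : (b + c + c*X) * (a*X^2 + b*(1+X)^2) ≤ ((b+2*c)*X)*((a+4*b)*X^2) := by
      have h1 : b + c + c*X ≤ (b+2*c)*X := by nlinarith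
      have h2 : a*X^2 + b*(1+X)^2 ≤ (a+4*b)*X^2 := by
        nlinarith [mul_nonneg hb.le (mul_nonneg (sub_nonneg.mpr hX1) (by linarith : (0:ℝ) ≤ 3*X+1))]
      have h3 : (0:ℝ) ≤ b + c + c*X := by positivity
      have h4 : (0:ℝ) ≤ a*X^2 + b*(1+X)^2 := by positivity
      exact mul_le_mul h1 h2 h4 (by positivity)
    have hfin : 0 < X^3*((a+b)*b*X^2 - (b+2*c)*(a+4*b)) := by
      have : 0 < X^3 := by positivity
      nlinarith
    simp only [hPdef]
    nlinarith [hT1, hT2, hfin]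
  have h0X : (0:ℝ) ≤ X := by linarith
  obtain ⟨x, hx, hPx⟩ := intermediate_value_Icc h0X hcont ⟨hP0.le, hPX.le⟩
  refine ⟨x, ?_, hPx⟩
  rcases lt_or_eq_of_le hx.1 with h | h
  · exact h
  · exfalso; rw [← h] at hPx; rw [hPx] at hP0; exact lt_irrefl 0 hP0

/-- Euler collinear central configurations: for any positive masses and any
ordering of the three bodies on a line, there exist distinct collinear
positions with center of mass at the origin and a constant `λ > 0` such that
the gravitational acceleration on each body equals `−λ qᵢ`. -/
theorem euler_collinear_central_configuration
    (G : ℝ) (hG : 0 < G) (m : Fin 3 → ℝ) (hm : ∀ i, 0 < m i) :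
    ∃ q : Fin 3 → ℝ, q 0 < q 1 ∧ q 1 < q 2 ∧ (∑ i, m i * q i) = 0 ∧
      ∃ lam : ℝ, 0 < lam ∧
        ∀ i : Fin 3,
          (∑ j ∈ Finset.univ \ {i}, G * m j * (q j - q i) / |q j - q i| ^ 3)
            = -lam * q i := by
  obtain ⟨a, b, c, ha, hb, hc, rfl⟩ :
      ∃ a b c : ℝ, 0 < a ∧ 0 < b ∧ 0 < c ∧ m = ![a, b, c] := by
    refine ⟨m 0, m 1, m 2, hm 0, hm 1, hm 2, ?_⟩
    funext i; fin_cases i <;> rfl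
  obtain ⟨x, hx, hP⟩ := euler_quintic_root a b c ha hb hc
  have hx1 : (0:ℝ) < 1 + x := by linarith
  have hxne : x ≠ 0 := ne_of_gt hx
  have hx1ne : (1:ℝ) + x ≠ 0 := ne_of_gt hx1
  have hM : (0:ℝ) < a + b + c := by linarith
  have hMne : a + b + c ≠ 0 := ne_of_gt hM
  set c0 : ℝ := (b + c*(1+x))/(a+b+c) with hc0def
  have hc0 : 0 < c0 := by positivity
  have hc0ne : c0 ≠ 0 := ne_of_gt hc0
  refine ⟨![0 - c0, 1 - c0, 1 + x - c0], by norm_num, by simp; linarith, ?_, ?_⟩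
  · simp [Fin.sum_univ_three, hc0def]
    field_simp
    ring
  · refine ⟨G*(b + c/(1+x)^2)/c0, by positivity, ?_⟩
    intro i
    fin_cases i <;>
      simp only [Fin.zero_eta, Fin.mk_one, Fin.reduceFinMk, Fin.isValue]
    · have hs : (univ \ {(0 : Fin 3)}) = {1, 2} := by decide
      rw [hs, Finset.sum_insert (by decide), Finset.sum_singleton]
      simp only [Matrix.cons_val_zero, Matrix.cons_val_one, Matrix.head_cons,
        Matrix.cons_val_two, Matrix.tail_cons]
      have e1 : (1 - c0) - (0 - c0) = (1:ℝ) := by ring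
      have e2 : (1 + x - c0) - (0 - c0) = 1 + x := by ring
      rw [e1, e2, abs_of_pos one_pos, abs_of_pos hx1]
      field_simp
      ring
    · have hs : (univ \ {(1 : Fin 3)}) = {0, 2} := by decide
      rw [hs, Finset.sum_insert (by decide), Finset.sum_singleton]
      simp only [Matrix.cons_val_zero, Matrix.cons_val_one, Matrix.head_cons,
        Matrix.cons_val_two, Matrix.tail_cons]
      have e1 : (0 - c0) - (1 - c0) = (-1 : ℝ) := by ring
      have e2 : (1 + x - c0) - (1 - c0) = x := by ring
      rw [e1, e2, abs_of_pos hx]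
      rw [show |(-1 : ℝ)| = 1 by norm_num]
      rw [hc0def]
      field_simp
      apply mul_left_cancel₀ (ne_of_gt hb)
      linear_combination (-c) * hP
    · have hs : (univ \ {(2 : Fin 3)}) = {0, 1} := by decide
      rw [hs, Finset.sum_insert (by decide), Finset.sum_singleton]
      simp only [Matrix.cons_val_zero, Matrix.cons_val_one, Matrix.head_cons,
        Matrix.cons_val_two, Matrix.tail_cons]
      have e1 : (0 - c0) - (1 + x - c0) = -(1+x) := by ring
      have e2 : (1 - c0) - (1 + x - c0) = -x := by ring
      rw [e1, e2, abs_neg, abs_neg, abs_of_pos hx, abs_of_pos hx1]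
      rw [hc0def]
      field_simp
      linear_combination hP
end

section
/- Euler's quintic equation has a unique positive root: for any positive masses m₁, m₂, m₃, the polynomial (m₁+m₂)x⁵ + (3m₁+2m₂)x⁴ + (3m₁+m₂)x³ − (m₂+3m₃)x² − (2m₂+3m₃)x − (m₂+m₃) has exactly one root in (0, ∞). -/
set_option maxHeartbeats 1000000 in
/-- Euler's quintic equation has a unique positive root: for positive masses
`m₁ m₂ m₃`, the polynomial
`(m₁+m₂)x⁵ + (3m₁+2m₂)x⁴ + (3m₁+m₂)x³ − (m₂+3m₃)x² − (2m₂+3m₃)x − (m₂+m₃)`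
has exactly one root in `(0, ∞)`. -/
theorem euler_quintic_unique_positive_root
    (m₁ m₂ m₃ : ℝ) (h₁ : 0 < m₁) (h₂ : 0 < m₂) (h₃ : 0 < m₃) :
    ∃! x : ℝ, 0 < x ∧
      (m₁ + m₂) * x ^ 5 + (3 * m₁ + 2 * m₂) * x ^ 4 + (3 * m₁ + m₂) * x ^ 3
        - (m₂ + 3 * m₃) * x ^ 2 - (2 * m₂ + 3 * m₃) * x - (m₂ + m₃) = 0 := by
  set f : ℝ → ℝ := fun x => (m₁ + m₂) * x ^ 5 + (3 * m₁ + 2 * m₂) * x ^ 4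
      + (3 * m₁ + m₂) * x ^ 3 - (m₂ + 3 * m₃) * x ^ 2 - (2 * m₂ + 3 * m₃) * x - (m₂ + m₃)
    with hf
  have hcont : Continuous f := by fun_prop
  -- small point where f is negative
  set δ : ℝ := min 1 ((m₂ + m₃) / (2 * (7 * m₁ + 4 * m₂))) with hδdef
  have hden : 0 < 2 * (7 * m₁ + 4 * m₂) := by positivity
  have hδ0 : 0 < δ := lt_min one_pos (by positivity)
  have hδ1 : δ ≤ 1 := min_le_left _ _
  have hδ2 : δ ≤ (m₂ + m₃) / (2 * (7 * m₁ + 4 * m₂)) := min_le_right _ _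
  have hδ2' : δ * (2 * (7 * m₁ + 4 * m₂)) ≤ m₂ + m₃ := by
    rw [← le_div_iff₀ hden]; exact hδ2
  have hδ5 : δ ^ 5 ≤ δ := by nlinarith [pow_pos hδ0 2, pow_pos hδ0 3, pow_pos hδ0 4]
  have hδ4 : δ ^ 4 ≤ δ := by nlinarith [pow_pos hδ0 2, pow_pos hδ0 3]
  have hδ3 : δ ^ 3 ≤ δ := by nlinarith [pow_pos hδ0 2]
  have hfδ : f δ < 0 := by
    simp only [hf]
    nlinarith [sq_nonneg δ, hδ0.le]
  -- large point where f is positive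
  set M : ℝ := 1 + (4 * m₂ + 7 * m₃) / (m₁ + m₂) with hMdef
  have hM1 : 1 ≤ M := by
    have h : 0 ≤ (4 * m₂ + 7 * m₃) / (m₁ + m₂) := by positivity
    rw [hMdef]; linarith
  have hMC : 4 * m₂ + 7 * m₃ < (m₁ + m₂) * M := by
    have h : (m₁ + m₂) * M = (m₁ + m₂) + (4 * m₂ + 7 * m₃) := by
      rw [hMdef]; field_simp
    linarith
  have hfM : 0 < f M := by
    simp only [hf]
    have hM0 : (0:ℝ) < M := lt_of_lt_of_le one_pos hM1
    nlinarith [pow_pos hM0 2, pow_pos hM0 3, pow_pos hM0 4, pow_pos hM0 5,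
      mul_pos (pow_pos hM0 2) (mul_pos h₁ hM0), sq_nonneg (M - 1),
      mul_nonneg (mul_nonneg (sq_nonneg (M-1)) hM0.le) (add_pos h₁ h₂).le,
      mul_nonneg (mul_nonneg (mul_nonneg (sq_nonneg (M-1)) hM0.le) hM0.le) (add_pos h₁ h₂).le]
  have hδM : δ ≤ M := le_trans hδ1 hM1
  -- existence via IVT
  obtain ⟨x, hxmem, hx0⟩ := intermediate_value_Icc hδM hcont.continuousOn
    (Set.mem_Icc.2 ⟨hfδ.le, hfM.le⟩)
  refine ⟨x, ⟨lt_of_lt_of_le hδ0 hxmem.1, hx0⟩, ?_⟩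
  rintro y ⟨hy0, hy⟩
  -- uniqueness: a²·f(b) − b²·f(a) > 0 for 0 < a < b
  have key : ∀ a b : ℝ, 0 < a → a < b → f a = 0 → f b = 0 → False := by
    intro a b ha hab hfa hfb
    have hb : 0 < b := ha.trans hab
    simp only [hf] at hfa hfb
    have e : (m₁ + m₂) * (a ^ 2 * b ^ 2) * (b ^ 3 - a ^ 3)
        + (3 * m₁ + 2 * m₂) * (a ^ 2 * b ^ 2) * (b ^ 2 - a ^ 2)
        + (3 * m₁ + m₂) * (a ^ 2 * b ^ 2) * (b - a)
        + (2 * m₂ + 3 * m₃) * (a * b) * (b - a)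
        + (m₂ + m₃) * (b ^ 2 - a ^ 2) = 0 := by
      linear_combination a ^ 2 * hfb - b ^ 2 * hfa
    have c1 : a ^ 3 < b ^ 3 := pow_lt_pow_left₀ hab ha.le (by norm_num)
    have c2 : a ^ 2 < b ^ 2 := pow_lt_pow_left₀ hab ha.le (by norm_num)
    have p1 : 0 < (m₁ + m₂) * (a ^ 2 * b ^ 2) * (b ^ 3 - a ^ 3) := by
      apply mul_pos (by positivity); linarith
    have p2 : 0 < (3 * m₁ + 2 * m₂) * (a ^ 2 * b ^ 2) * (b ^ 2 - a ^ 2) := by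
      apply mul_pos (by positivity); linarith
    have p3 : 0 < (3 * m₁ + m₂) * (a ^ 2 * b ^ 2) * (b - a) := by
      apply mul_pos (by positivity); linarith
    have p4 : 0 < (2 * m₂ + 3 * m₃) * (a * b) * (b - a) := by
      apply mul_pos (by positivity); linarith
    have p5 : 0 < (m₂ + m₃) * (b ^ 2 - a ^ 2) := by
      apply mul_pos (by positivity); linarith
    linarith
  have hx0' : 0 < x := lt_of_lt_of_le hδ0 hxmem.1
  rcases lt_trichotomy y x with h | h | h
  · exact absurd (key y x hy0 h hy hx0) id
  · exact h
  · exact absurd (key x y hx0' h hx0 hy) id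
end

section
/- Gascheau's stability criterion: the linearization at the equilateral point L₄ of the planar circular restricted three-body problem has four purely imaginary eigenvalues (hence L₄ is spectrally stable) if and only if 27 μ(1−μ) < 1, i.e. μ < (1 − √(23/27))/2. -/
lemma gascheau_aux (a b p : ℝ) (ha0 : 0 < a) (hb0 : 0 < b) (hab : b < a)
    (hA : a ^ 4 - a ^ 2 + p = 0) (hB : b ^ 4 - b ^ 2 + p = 0) :
    ∃ l : Fin 4 → ℂ, Function.Injective l ∧
      ∀ i, (l i).re = 0 ∧ l i ^ 4 + l i ^ 2 + (p : ℂ) = 0 := by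
  have key : ∀ x : ℝ, x ^ 4 - x ^ 2 + p = 0 →
      ((x : ℂ) * Complex.I) ^ 4 + ((x : ℂ) * Complex.I) ^ 2 + (p : ℂ) = 0 := by
    intro x hx
    have hI2 : (Complex.I) ^ 2 = -1 := Complex.I_sq
    have hI4 : (Complex.I) ^ 4 = 1 := by
      rw [show (4 : ℕ) = 2 * 2 by rfl, pow_mul, hI2]; ring
    have : ((x : ℂ) * Complex.I) ^ 4 + ((x : ℂ) * Complex.I) ^ 2 + (p : ℂ)
        = ((x ^ 4 - x ^ 2 + p : ℝ) : ℂ) := by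
      push_cast
      rw [mul_pow, mul_pow, hI2, hI4]
      ring
    rw [this, hx]; simp
  have keyneg : ∀ x : ℝ, x ^ 4 - x ^ 2 + p = 0 →
      (-((x : ℂ) * Complex.I)) ^ 4 + (-((x : ℂ) * Complex.I)) ^ 2 + (p : ℂ) = 0 := by
    intro x hx
    have := key x hx
    linear_combination this
  refine ⟨![(a : ℂ) * Complex.I, -((a : ℂ) * Complex.I),
            (b : ℂ) * Complex.I, -((b : ℂ) * Complex.I)], ?_, ?_⟩
  · clear key keyneg
    intro i j h
    fin_cases i <;> fin_cases j <;>
      first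
        | rfl
        | (exfalso; simp [Complex.ext_iff] at h; linarith)
  · intro i
    fin_cases i
    · exact ⟨by simp, key a hA⟩
    · exact ⟨by simp, keyneg a hA⟩
    · exact ⟨by simp, key b hB⟩
    · exact ⟨by simp, keyneg b hB⟩

/-- Gascheau's stability criterion: the linearization at `L₄` of the planar
circular restricted three-body problem, with characteristic polynomial
`λ⁴ + λ² + (27/4)μ(1−μ)`, has four distinct purely imaginary eigenvalues if and
only if `27μ(1−μ) < 1`, i.e. `μ < (1 − √(23/27))/2`. -/
theorem gascheau_criterion (μ : ℝ) (hμ0 : 0 < μ) (hμ2 : μ < 1 / 2) :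
    ((∃ l : Fin 4 → ℂ, Function.Injective l ∧
        ∀ i, (l i).re = 0 ∧
          l i ^ 4 + l i ^ 2 + (27 / 4) * (μ : ℂ) * (1 - (μ : ℂ)) = 0)
      ↔ 27 * μ * (1 - μ) < 1) ∧
    (27 * μ * (1 - μ) < 1 ↔ μ < (1 - Real.sqrt (23 / 27)) / 2) := by
  have hq : 0 < μ * (1 - μ) := mul_pos hμ0 (by linarith)
  have hcast : (27 / 4 : ℂ) * (μ : ℂ) * (1 - (μ : ℂ))
      = ((27 / 4 * (μ * (1 - μ)) : ℝ) : ℂ) := by push_cast; ring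
  constructor
  · constructor
    · rintro ⟨l, hinj, hl⟩
      by_contra hge
      push_neg at hge
      have key : ∀ i, (l i).im ^ 2 = 1 / 2 := by
        intro i
        obtain ⟨hre, heq⟩ := hl i
        set t := (l i).im with ht
        have hli : l i = (t : ℂ) * Complex.I := by
          apply Complex.ext <;> simp [hre, ht]
        have hI2 : (Complex.I) ^ 2 = -1 := Complex.I_sq
        have hI4 : (Complex.I) ^ 4 = 1 := by
          rw [show (4 : ℕ) = 2 * 2 by rfl, pow_mul, hI2]; ring
        rw [hli, hcast] at heq
        have h2 : ((t : ℂ) * Complex.I) ^ 4 + ((t : ℂ) * Complex.I) ^ 2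
            + ((27 / 4 * (μ * (1 - μ)) : ℝ) : ℂ)
            = ((t ^ 4 - t ^ 2 + 27 / 4 * (μ * (1 - μ)) : ℝ) : ℂ) := by
          push_cast
          rw [mul_pow, mul_pow, hI2, hI4]
          ring
        rw [h2] at heq
        have h3 : t ^ 4 - t ^ 2 + 27 / 4 * (μ * (1 - μ)) = 0 := by
          exact_mod_cast heq
        nlinarith [sq_nonneg (t ^ 2 - 1 / 2)]
      have him : ∀ i j, (l i).im = (l j).im → i = j := by
        intro i j h
        apply hinj
        apply Complex.ext
        · rw [(hl i).1, (hl j).1]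
        · exact h
      have neg : ∀ i j : Fin 4, i ≠ j → (l i).im = -(l j).im := by
        intro i j hij
        have hsq : (l i).im ^ 2 = (l j).im ^ 2 := by rw [key i, key j]
        rcases mul_eq_zero.mp (show ((l i).im - (l j).im) * ((l i).im + (l j).im) = 0 by
          nlinarith) with h | h
        · exact absurd (him i j (by linarith)) hij
        · linarith
      have h10 := neg 1 0 (by decide)
      have h20 := neg 2 0 (by decide)
      have h12 := him 1 2 (by rw [h10, h20])
      exact absurd h12 (by decide)
    · intro hlt
      obtain ⟨d, hd2, hd0⟩ : ∃ d : ℝ, d ^ 2 = 1 - 27 * (μ * (1 - μ)) ∧ 0 < d :=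
        ⟨Real.sqrt (1 - 27 * (μ * (1 - μ))),
          Real.sq_sqrt (by linarith), Real.sqrt_pos.mpr (by linarith)⟩
      have hd1 : d < 1 := by nlinarith
      obtain ⟨a, ha2, ha0⟩ : ∃ a : ℝ, a ^ 2 = (1 + d) / 2 ∧ 0 < a :=
        ⟨Real.sqrt ((1 + d) / 2), Real.sq_sqrt (by linarith), Real.sqrt_pos.mpr (by linarith)⟩
      obtain ⟨b, hb2, hb0⟩ : ∃ b : ℝ, b ^ 2 = (1 - d) / 2 ∧ 0 < b :=
        ⟨Real.sqrt ((1 - d) / 2), Real.sq_sqrt (by linarith), Real.sqrt_pos.mpr (by linarith)⟩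
      have hab : b < a := by nlinarith
      have hAroot : a ^ 4 - a ^ 2 + 27 / 4 * (μ * (1 - μ)) = 0 := by
        have h4 : a ^ 4 = ((1 + d) / 2) ^ 2 := by
          rw [show a ^ 4 = (a ^ 2) ^ 2 by ring, ha2]
        nlinarith
      have hBroot : b ^ 4 - b ^ 2 + 27 / 4 * (μ * (1 - μ)) = 0 := by
        have h4 : b ^ 4 = ((1 - d) / 2) ^ 2 := by
          rw [show b ^ 4 = (b ^ 2) ^ 2 by ring, hb2]
        nlinarith
      obtain ⟨l, hinj, hl⟩ := gascheau_aux a b (27 / 4 * (μ * (1 - μ))) ha0 hb0 hab hAroot hBroot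
      refine ⟨l, hinj, fun i => ⟨(hl i).1, ?_⟩⟩
      rw [hcast]
      exact (hl i).2
  · have hc2 : Real.sqrt (23 / 27) ^ 2 = 23 / 27 := Real.sq_sqrt (by norm_num)
    have hc0 : 0 < Real.sqrt (23 / 27) := Real.sqrt_pos.mpr (by norm_num)
    set c := Real.sqrt (23 / 27)
    constructor
    · intro h
      nlinarith [sq_nonneg (1 - 2 * μ - c), sq_nonneg (1 - 2 * μ + c)]
    · intro h
      nlinarith [sq_nonneg (1 - 2 * μ - c), sq_nonneg (1 - 2 * μ + c)]
end
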